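/- Let E be a finite set partitioned into blocks E_1, …, E_ℓ with nonnegative integers k_1, …, k_ℓ, and let I = {X ⊆ E : |X ∩ E_i| ≤ k_i for all i ∈ [ℓ]} be the independence family of the corresponding partition matroid. Let S be a family of sets in I, each of size exactly p, and let ℓ' ≥ 0. Then there exists a subfamily Ŝ ⊆ S that is ℓ'-representative for S (with respect to I) and satisfies |Ŝ| ≤ C(p + ℓ', p). -/

import Mathlib

open ExteriorAlgebra Submodule
open scoped Classical
set_option linter.unusedSectionVars false

/-- A wedge of linearly independent vectors over a field is nonzero. -/
theorem aux_iMulti_ne_zero {K V : Type*} [Field K] [AddCommGroup V] [Module K V]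
    {m : ℕ} {v : Fin m → V} (hv : LinearIndependent K v) :
    ExteriorAlgebra.ιMulti K m v ≠ 0 := by
  classical
  set W := Submodule.span K (Set.range v) with hW
  obtain ⟨q, hq⟩ := Submodule.exists_isCompl W
  set pr := Submodule.linearProjOfIsCompl W q hq with hpr
  set b := Module.Basis.span hv with hb
  set G : V →ₗ[K] (Fin m → K) := (b.equivFun.toLinearMap).comp pr with hG
  have hGv : ∀ i j, G (v i) j = if i = j then 1 else 0 := by
    intro i j
    have hmem : v i ∈ W := Submodule.subset_span ⟨i, rfl⟩
    have h1 : pr (v i) = ⟨v i, hmem⟩ := by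
      exact Submodule.linearProjOfIsCompl_apply_left hq ⟨v i, hmem⟩
    have h2 : b i = ⟨v i, hmem⟩ := Module.Basis.span_apply hv i
    simp [hG, h1, ← h2, Module.Basis.equivFun_self]
  set f : V [⋀^Fin m]→ₗ[K] K := (Matrix.detRowAlternating).compLinearMap G with hf
  have hfv : f v = 1 := by
    have : (Matrix.of fun i => G (v i)) = (1 : Matrix (Fin m) (Fin m) K) := by
      ext i j
      simp [Matrix.one_apply, hGv]
    show Matrix.detRowAlternating (fun i => G (v i)) = 1
    calc Matrix.detRowAlternating (fun i => G (v i))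
        = Matrix.det (Matrix.of fun i => G (v i)) := rfl
      _ = 1 := by rw [this, Matrix.det_one]
  intro h0
  set fam : ∀ i : ℕ, V [⋀^Fin i]→ₗ[K] K := fun i => if h : m = i then h ▸ f else 0 with hfam
  have := ExteriorAlgebra.liftAlternating_apply_ιMulti fam v
  rw [h0, map_zero] at this
  have hmm : fam m = f := by simp [hfam]
  rw [hmm, hfv] at this
  exact one_ne_zero this.symm

/-- Product of two `ιMulti`s. -/
theorem aux_iMulti_mul {K V : Type*} [CommRing K] [AddCommGroup V] [Module K V]
    {a b : ℕ} (f : Fin a → V) (g : Fin b → V) :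
    ExteriorAlgebra.ιMulti K a f * ExteriorAlgebra.ιMulti K b g
      = ExteriorAlgebra.ιMulti K (a + b) (Fin.append f g) := by
  rw [ExteriorAlgebra.ιMulti_apply, ExteriorAlgebra.ιMulti_apply, ExteriorAlgebra.ιMulti_apply,
    List.ofFn_add, List.prod_append]
  congr 1
  · exact congrArg _ (congrArg _ (funext fun i => congrArg _ (Fin.append_left f g i).symm))
  · simp only [Fin.append_right]

/-- Cardinality bound: a linearly independent family inside the span of a finite set. -/
theorem aux_card_le_of_span {K V : Type*} [Field K] [AddCommGroup V] [Module K V]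
    {ι : Type*} [Fintype ι] {w : ι → V} (t : Finset V)
    (hw : ∀ i, w i ∈ Submodule.span K (↑t : Set V)) (hli : LinearIndependent K w) :
    Fintype.card ι ≤ t.card := by
  haveI := FiniteDimensional.span_finset K t
  set w' : ι → Submodule.span K (↑t : Set V) := fun i => ⟨w i, hw i⟩ with hw'
  have hli' : LinearIndependent K w' := by
    apply LinearIndependent.of_comp (Submodule.span K (↑t : Set V)).subtype
    exact hli
  exact hli'.fintype_card_le_finrank.trans (finrank_span_finset_le_card t)

/-- The canonical wedge associated to a subset of `Fin n` (zero if wrong size). -/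
noncomputable def auxBf (K : Type*) [Field K] (n p : ℕ) (s : Finset (Fin n)) :
    ExteriorAlgebra K (Fin n → K) :=
  if h : s.card = p then
    ExteriorAlgebra.ιMulti K p (fun i => (Pi.single ((s.orderIsoOfFin h) i) 1 : Fin n → K))
  else 0

theorem aux_iMulti_mem_span (K : Type*) [Field K] (n p : ℕ) (v : Fin p → (Fin n → K)) :
    ExteriorAlgebra.ιMulti K p v ∈ Submodule.span K
      (↑((Finset.powersetCard p (Finset.univ : Finset (Fin n))).image (auxBf K n p)) :
        Set (ExteriorAlgebra K (Fin n → K))) := by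
  classical
  have hv : v = fun i => ∑ c : Fin n, v i c • (Pi.single c 1 : Fin n → K) := by
    funext i j
    simp [Pi.single_apply, Finset.sum_apply, mul_ite]
  rw [hv]
  have hexp := (ExteriorAlgebra.ιMulti K p (M := Fin n → K)).toMultilinearMap.map_sum
    (g := fun i (c : Fin n) => v i c • (Pi.single c 1 : Fin n → K))
  have hcoe : ∀ w : Fin p → (Fin n → K),
      (ExteriorAlgebra.ιMulti K p (M := Fin n → K)).toMultilinearMap w
        = ExteriorAlgebra.ιMulti K p w := fun _ => rfl
  rw [hcoe] at hexp
  rw [hexp]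
  apply Submodule.sum_mem
  intro r _
  rw [hcoe]
  have hsmul := (ExteriorAlgebra.ιMulti K p (M := Fin n → K)).toMultilinearMap.map_smul_univ
    (fun i => v i (r i)) (fun i => (Pi.single (r i) 1 : Fin n → K))
  rw [hcoe, hcoe] at hsmul
  rw [hsmul]
  apply Submodule.smul_mem
  by_cases hr : Function.Injective r
  · -- injective case: the wedge is ± a canonical wedge
    set s : Finset (Fin n) := Finset.univ.image r with hs
    have hscard : s.card = p := by
      rw [hs, Finset.card_image_of_injective _ hr, Finset.card_univ, Fintype.card_fin]
    have hrange : Set.range r = (↑s : Set (Fin n)) := by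
      simp [hs, Finset.coe_image]
    set σ : Equiv.Perm (Fin p) :=
      (Equiv.ofInjective r hr).trans ((Equiv.setCongr hrange).trans
        (s.orderIsoOfFin hscard).toEquiv.symm) with hσ
    have hkey : (fun i => (Pi.single ((s.orderIsoOfFin hscard) i) 1 : Fin n → K)) ∘ σ
        = fun i => (Pi.single (r i) 1 : Fin n → K) := by
      funext i
      have : ((s.orderIsoOfFin hscard) (σ i) : Fin n) = r i := by
        have h2 := (s.orderIsoOfFin hscard).toEquiv.apply_symm_apply
          ((Equiv.setCongr hrange) ((Equiv.ofInjective r hr) i))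
        show (((s.orderIsoOfFin hscard).toEquiv
          ((s.orderIsoOfFin hscard).toEquiv.symm
            ((Equiv.setCongr hrange) ((Equiv.ofInjective r hr) i)))) : Fin n) = r i
        rw [h2]
        rfl
      simp [Function.comp, this]
    have hperm := (ExteriorAlgebra.ιMulti K p (M := Fin n → K)).map_perm
      (fun i => (Pi.single ((s.orderIsoOfFin hscard) i) 1 : Fin n → K)) σ
    rw [hkey] at hperm
    have hmem : auxBf K n p s ∈ Submodule.span K
        (↑((Finset.powersetCard p (Finset.univ : Finset (Fin n))).image (auxBf K n p)) :
          Set (ExteriorAlgebra K (Fin n → K))) := by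
      apply Submodule.subset_span
      exact Finset.mem_coe.2 (Finset.mem_image_of_mem _
        (Finset.mem_powersetCard.2 ⟨Finset.subset_univ _, hscard⟩))
    have hBf : auxBf K n p s
        = ExteriorAlgebra.ιMulti K p (fun i => (Pi.single ((s.orderIsoOfFin hscard) i) 1 : Fin n → K)) := by
      rw [auxBf, dif_pos hscard]
    rw [hperm, ← hBf]
    rcases Int.units_eq_one_or (Equiv.Perm.sign σ) with h1 | h1 <;> rw [h1]
    · simpa using hmem
    · simpa using Submodule.neg_mem _ hmem
  · -- non-injective: the wedge is zero
    rw [Function.not_injective_iff] at hr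
    obtain ⟨i, j, hij, hne⟩ := hr
    have : ExteriorAlgebra.ιMulti K p (fun i => (Pi.single (r i) 1 : Fin n → K)) = 0 :=
      AlternatingMap.map_eq_zero_of_eq _ _ (by rw [hij]) hne
    rw [this]
    exact Submodule.zero_mem _

section AuxDefs

variable {α : Type*} [DecidableEq α]

/-- Canonical enumeration of a finset of known cardinality. -/
noncomputable def auxEnum (q : ℕ) (X : Finset α) (h : X.card = q) : Fin q → α :=
  fun i => (X.equivFin.symm (Fin.cast h.symm i) : α)

theorem auxEnum_mem {q : ℕ} {X : Finset α} (h : X.card = q) (i : Fin q) :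
    auxEnum q X h i ∈ X := (X.equivFin.symm (Fin.cast h.symm i)).2

theorem auxEnum_inj {q : ℕ} {X : Finset α} (h : X.card = q) :
    Function.Injective (auxEnum q X h) := by
  intro i j hij
  have := Subtype.ext hij (p := fun x => x ∈ X)
  have h2 := X.equivFin.symm.injective this
  simpa [Fin.ext_iff] using congrArg Fin.val h2

theorem auxEnum_range {q : ℕ} {X : Finset α} (h : X.card = q) :
    Set.range (auxEnum q X h) = (↑X : Set α) := by
  ext e
  constructor
  · rintro ⟨i, rfl⟩
    exact auxEnum_mem h i
  · intro he
    refine ⟨Fin.cast h (X.equivFin ⟨e, he⟩), ?_⟩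
    show ((X.equivFin.symm (Fin.cast h.symm (Fin.cast h (X.equivFin ⟨e, he⟩)))) : α) = e
    have : Fin.cast h.symm (Fin.cast h (X.equivFin ⟨e, he⟩)) = X.equivFin ⟨e, he⟩ := by
      apply Fin.ext; rfl
    rw [this, Equiv.symm_apply_apply]

variable (α) in
/-- Index type for the polynomial variables. -/
abbrev auxVar (ℓ n : ℕ) : Type _ := (α × Fin n) ⊕ (Fin ℓ × Fin n × Fin n)

variable (α) in
abbrev auxR (ℓ n : ℕ) := MvPolynomial (auxVar α ℓ n) ℚ

variable (α) in
abbrev auxK (ℓ n : ℕ) := FractionRing (auxR α ℓ n)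

/-- Index set for the slots of a block. -/
noncomputable def auxJ {ℓ : ℕ} (kb : Fin ℓ → ℕ) (n : ℕ) (i : Fin ℓ) : Finset (Fin n) :=
  Finset.univ.filter (fun j => (j : ℕ) < min (kb i) n)

/-- The generic vector (over the polynomial ring) assigned to an element. -/
noncomputable def auxU {ℓ : ℕ} (Eb : Fin ℓ → Finset α) (kb : Fin ℓ → ℕ) (n : ℕ) :
    α → Fin n → auxR α ℓ n := fun e c =>
  if h : ∃ i, e ∈ Eb i then
    ∑ j ∈ auxJ kb n h.choose,
      MvPolynomial.X (Sum.inl (e, j)) * MvPolynomial.X (Sum.inr (h.choose, j, c))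
  else 0

/-- The generic vector over the fraction field. -/
noncomputable def auxUK {ℓ : ℕ} (Eb : Fin ℓ → Finset α) (kb : Fin ℓ → ℕ) (n : ℕ) :
    α → Fin n → auxK α ℓ n := fun e c => algebraMap _ _ (auxU Eb kb n e c)

/-- The generic basis vector of a block slot. -/
noncomputable def auxB {ℓ : ℕ} (n : ℕ) (i : Fin ℓ) (j : Fin n) : Fin n → auxK α ℓ n :=
  fun c => algebraMap (auxR α ℓ n) _ (MvPolynomial.X (Sum.inr (i, j, c)))

theorem aux_choose_eq {ℓ : ℕ} {Eb : Fin ℓ → Finset α}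
    (hdisj : ∀ i j, i ≠ j → Disjoint (Eb i) (Eb j)) {e : α} {i : Fin ℓ}
    (hei : e ∈ Eb i) (h : ∃ i, e ∈ Eb i) : h.choose = i := by
  by_contra hne
  exact (Finset.disjoint_left.1 (hdisj _ _ hne) h.choose_spec) hei

theorem auxUK_eq_sum {ℓ : ℕ} {Eb : Fin ℓ → Finset α} {kb : Fin ℓ → ℕ} {n : ℕ}
    (hdisj : ∀ i j, i ≠ j → Disjoint (Eb i) (Eb j)) {e : α} {i : Fin ℓ} (hei : e ∈ Eb i) :
    auxUK Eb kb n e = ∑ j ∈ auxJ kb n i,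
      (algebraMap (auxR α ℓ n) (auxK α ℓ n) (MvPolynomial.X (Sum.inl (e, j)))) • auxB (α := α) n i j := by
  have h : ∃ i, e ∈ Eb i := ⟨i, hei⟩
  funext c
  rw [auxUK, auxU, dif_pos h, aux_choose_eq hdisj hei h, map_sum]
  rw [Finset.sum_apply]
  refine Finset.sum_congr rfl fun j _ => ?_
  rw [map_mul]
  rfl

theorem auxJ_card_le {ℓ : ℕ} (kb : Fin ℓ → ℕ) (n : ℕ) (i : Fin ℓ) :
    (auxJ kb n i).card ≤ kb i := by
  have h1 : (auxJ kb n i).card ≤ (Finset.range (min (kb i) n)).card := by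
    refine Finset.card_le_card_of_injOn (fun j => (j : ℕ)) ?_ ?_
    · intro j hj
      have hj' : j ∈ auxJ kb n i := hj
      simp only [auxJ, Finset.mem_filter] at hj'
      simpa using hj'.2
    · intro a _ b _ hab
      exact Fin.ext hab
  rw [Finset.card_range] at h1
  exact h1.trans (min_le_left _ _)

/-- Claim A: if a capacity is violated, the vectors are dependent. -/
theorem auxClaimA {ℓ : ℕ} {Eb : Fin ℓ → Finset α} {kb : Fin ℓ → ℕ} {n : ℕ}
    (hdisj : ∀ i j, i ≠ j → Disjoint (Eb i) (Eb j))
    (T : Finset α) (i : Fin ℓ) (hcap : kb i < (T ∩ Eb i).card) :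
    ¬ LinearIndependent (auxK α ℓ n) (fun x : {x // x ∈ T} => auxUK Eb kb n x) := by
  intro hli
  have hsub : LinearIndependent (auxK α ℓ n)
      (fun x : {x // x ∈ T ∩ Eb i} => auxUK Eb kb n x) := by
    refine hli.comp (fun x : {x // x ∈ T ∩ Eb i} =>
        (⟨x.1, (Finset.mem_inter.1 x.2).1⟩ : {x // x ∈ T})) ?_
    intro a b hab
    exact Subtype.ext (Subtype.mk_eq_mk.1 hab)
  have hmem : ∀ x : {x // x ∈ T ∩ Eb i}, auxUK Eb kb n x.1 ∈
      Submodule.span (auxK α ℓ n) (↑((auxJ kb n i).image (auxB (α := α) n i)) : Set (Fin n → auxK α ℓ n)) := by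
    intro x
    rw [auxUK_eq_sum hdisj (Finset.mem_inter.1 x.2).2]
    apply Submodule.sum_mem
    intro j hj
    exact Submodule.smul_mem _ _ (Submodule.subset_span
      (Finset.mem_coe.2 (Finset.mem_image_of_mem _ hj)))
  have hcard := aux_card_le_of_span _ hmem hsub
  rw [Fintype.card_coe] at hcard
  have : (T ∩ Eb i).card ≤ kb i :=
    hcard.trans ((Finset.card_image_le).trans (auxJ_card_le kb n i))
  omega

end AuxDefs
section ClaimB

variable {α : Type*} [DecidableEq α]

noncomputable def auxCoord (T : Finset α) (e : α) : ℕ :=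
  if h : e ∈ T then (T.equivFin ⟨e, h⟩ : ℕ) else 0

noncomputable def auxSlot {ℓ : ℕ} (Eb : Fin ℓ → Finset α) (T : Finset α) (e : α) : ℕ :=
  if h : e ∈ T ∧ ∃ i, e ∈ Eb i then
    ((T ∩ Eb h.2.choose).equivFin ⟨e, Finset.mem_inter.2 ⟨h.1, h.2.choose_spec⟩⟩ : ℕ)
  else 0

theorem auxSlot_eq {ℓ : ℕ} {Eb : Fin ℓ → Finset α}
    (hdisj : ∀ i j, i ≠ j → Disjoint (Eb i) (Eb j)) {T : Finset α} {e : α} {i : Fin ℓ}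
    (he : e ∈ T) (hei : e ∈ Eb i) :
    auxSlot Eb T e = ((T ∩ Eb i).equivFin ⟨e, Finset.mem_inter.2 ⟨he, hei⟩⟩ : ℕ) := by
  have h : e ∈ T ∧ ∃ i, e ∈ Eb i := ⟨he, ⟨i, hei⟩⟩
  rw [auxSlot, dif_pos h]
  have hch : h.2.choose = i := aux_choose_eq hdisj hei h.2
  revert hei
  rw [← hch]
  intro hei
  rfl

theorem auxSlot_lt {ℓ : ℕ} {Eb : Fin ℓ → Finset α}
    (hdisj : ∀ i j, i ≠ j → Disjoint (Eb i) (Eb j)) {T : Finset α} {e : α} {i : Fin ℓ}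
    (he : e ∈ T) (hei : e ∈ Eb i) :
    auxSlot Eb T e < (T ∩ Eb i).card := by
  rw [auxSlot_eq hdisj he hei]
  exact ((T ∩ Eb i).equivFin _).isLt

theorem auxSlot_injOn {ℓ : ℕ} {Eb : Fin ℓ → Finset α}
    (hdisj : ∀ i j, i ≠ j → Disjoint (Eb i) (Eb j)) {T : Finset α} {e e' : α} {i : Fin ℓ}
    (he : e ∈ T) (hei : e ∈ Eb i) (he' : e' ∈ T) (hei' : e' ∈ Eb i)
    (hs : auxSlot Eb T e = auxSlot Eb T e') : e = e' := by
  rw [auxSlot_eq hdisj he hei, auxSlot_eq hdisj he' hei'] at hs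
  have := (T ∩ Eb i).equivFin.injective (Fin.ext hs)
  exact congrArg Subtype.val this

noncomputable def auxPt {ℓ : ℕ} (Eb : Fin ℓ → Finset α) (T : Finset α) (n : ℕ) :
    auxVar α ℓ n → ℚ := fun z =>
  match z with
  | Sum.inl (e, j) => if e ∈ T ∧ (j : ℕ) = auxSlot Eb T e then 1 else 0
  | Sum.inr (i, j, c) =>
      if ∃ e, e ∈ T ∧ e ∈ Eb i ∧ auxSlot Eb T e = (j : ℕ) ∧ auxCoord T e = (c : ℕ)
      then 1 else 0

theorem auxEval {ℓ n : ℕ} {Eb : Fin ℓ → Finset α} {kb : Fin ℓ → ℕ}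
    (hdisj : ∀ i j, i ≠ j → Disjoint (Eb i) (Eb j)) {T : Finset α}
    (hTE : ∀ e ∈ T, ∃ i, e ∈ Eb i) (hTn : T.card ≤ n)
    (hTcap : ∀ i, (T ∩ Eb i).card ≤ kb i)
    {e : α} (he : e ∈ T) (c : Fin n) :
    MvPolynomial.eval (auxPt Eb T n) (auxU Eb kb n e c)
      = if auxCoord T e = (c : ℕ) then 1 else 0 := by
  obtain ⟨i, hei⟩ := hTE e he
  have hex : ∃ i, e ∈ Eb i := ⟨i, hei⟩
  rw [auxU, dif_pos hex, aux_choose_eq hdisj hei hex, map_sum]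
  have hslt : auxSlot Eb T e < (T ∩ Eb i).card := auxSlot_lt hdisj he hei
  have hsltn : auxSlot Eb T e < n :=
    lt_of_lt_of_le hslt (le_trans (Finset.card_le_card Finset.inter_subset_left) hTn)
  set jf : Fin n := ⟨auxSlot Eb T e, hsltn⟩ with hjfdef
  have hjf : jf ∈ auxJ kb n i := by
    simp only [auxJ, Finset.mem_filter, Finset.mem_univ, true_and]
    exact lt_min (lt_of_lt_of_le hslt (hTcap i)) hsltn
  have hstep : ∀ j ∈ auxJ kb n i,
      MvPolynomial.eval (auxPt Eb T n)
        (MvPolynomial.X (Sum.inl (e, j)) * MvPolynomial.X (Sum.inr (i, j, c)))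
      = if j = jf then (auxPt Eb T n) (Sum.inr (i, j, c)) else 0 := by
    intro j _
    rw [map_mul, MvPolynomial.eval_X, MvPolynomial.eval_X]
    show (if e ∈ T ∧ (j : ℕ) = auxSlot Eb T e then (1 : ℚ) else 0) * _ = _
    by_cases hje : j = jf
    · subst hje
      rw [if_pos ⟨he, rfl⟩, one_mul, if_pos rfl]
    · rw [if_neg, if_neg hje, zero_mul]
      rintro ⟨-, hv⟩
      exact hje (Fin.ext (by rw [hjfdef]; exact hv))
  rw [Finset.sum_congr rfl hstep, Finset.sum_ite_eq' (auxJ kb n i) jf, if_pos hjf]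
  show (if ∃ e', e' ∈ T ∧ e' ∈ Eb i ∧ auxSlot Eb T e' = (jf : ℕ) ∧ auxCoord T e' = (c : ℕ)
      then (1 : ℚ) else 0) = _
  by_cases hc : auxCoord T e = (c : ℕ)
  · rw [if_pos ⟨e, he, hei, rfl, hc⟩, if_pos hc]
  · rw [if_neg, if_neg hc]
    rintro ⟨e', he', hei', hs', hc'⟩
    have hee : e' = e := auxSlot_injOn hdisj he' hei' he hei (by rw [hs'])
    exact hc (hee ▸ hc')

/-- Claim B: if all capacities are respected and `|T| ≤ n`, the vectors are independent. -/
theorem auxClaimB {ℓ n : ℕ} {Eb : Fin ℓ → Finset α} {kb : Fin ℓ → ℕ}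
    (hdisj : ∀ i j, i ≠ j → Disjoint (Eb i) (Eb j))
    (T : Finset α) (hTE : ∀ e ∈ T, ∃ i, e ∈ Eb i) (hTn : T.card ≤ n)
    (hTcap : ∀ i, (T ∩ Eb i).card ≤ kb i) :
    LinearIndependent (auxK α ℓ n) (fun x : {x // x ∈ T} => auxUK Eb kb n x) := by
  classical
  set m := T.card with hm
  let ten : Fin m → {x // x ∈ T} := T.equivFin.symm
  let Amat : Matrix (Fin m) (Fin m) (auxR α ℓ n) :=
    Matrix.of (fun rr cc => auxU Eb kb n (ten rr : α) (Fin.castLE hTn cc))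
  have hAev : Amat.map (MvPolynomial.eval (auxPt Eb T n)) = (1 : Matrix (Fin m) (Fin m) ℚ) := by
    ext rr cc
    rw [Matrix.map_apply]
    show MvPolynomial.eval (auxPt Eb T n) (auxU Eb kb n (ten rr : α) (Fin.castLE hTn cc)) = _
    rw [auxEval hdisj hTE hTn hTcap (ten rr).2 (Fin.castLE hTn cc)]
    have hcoord : auxCoord T ((ten rr : α)) = (rr : ℕ) := by
      rw [auxCoord, dif_pos (ten rr).2]
      have h1 : (⟨(ten rr : α), (ten rr).2⟩ : {x // x ∈ T}) = ten rr := rfl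
      rw [h1]
      show ((T.equivFin (T.equivFin.symm rr)) : ℕ) = (rr : ℕ)
      rw [Equiv.apply_symm_apply]
    rw [hcoord]
    simp [Matrix.one_apply, Fin.ext_iff]
  have hdetne : Amat.det ≠ 0 := by
    intro h0
    have h1 := RingHom.map_det (MvPolynomial.eval (auxPt Eb T n)) Amat
    rw [h0, map_zero, RingHom.mapMatrix_apply, hAev, Matrix.det_one] at h1
    exact one_ne_zero h1.symm
  set AK : Matrix (Fin m) (Fin m) (auxK α ℓ n) :=
    Amat.map (algebraMap (auxR α ℓ n) (auxK α ℓ n)) with hAK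
  have hdetK : AK.det ≠ 0 := by
    intro h0
    have h1 := RingHom.map_det (algebraMap (auxR α ℓ n) (auxK α ℓ n)) Amat
    rw [RingHom.mapMatrix_apply, ← hAK, h0] at h1
    exact hdetne (IsFractionRing.injective (auxR α ℓ n) (auxK α ℓ n) (by rw [map_zero]; exact h1))
  have hrows : LinearIndependent (auxK α ℓ n) (fun rr => AK rr) :=
    Matrix.linearIndependent_rows_iff_isUnit.2
      ((Matrix.isUnit_iff_isUnit_det AK).2 (isUnit_iff_ne_zero.2 hdetK))
  have hcompeq : (⇑(LinearMap.funLeft (auxK α ℓ n) (auxK α ℓ n) (Fin.castLE hTn))) ∘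
      (fun rr : Fin m => auxUK Eb kb n (ten rr : α)) = fun rr => AK rr := rfl
  have hfin : LinearIndependent (auxK α ℓ n) (fun rr : Fin m => auxUK Eb kb n (ten rr : α)) :=
    LinearIndependent.of_comp _ (hcompeq ▸ hrows)
  exact (linearIndependent_equiv (T.equivFin.symm)).1 hfin

end ClaimB
section Glue

variable {α : Type*} [DecidableEq α]

theorem aux_append_comp {a b : ℕ} {β γ : Type*} (h : β → γ) (f : Fin a → β) (g : Fin b → β) :
    Fin.append (h ∘ f) (h ∘ g) = h ∘ Fin.append f g := by
  funext i
  induction i using Fin.addCases with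
  | left i => simp [Fin.append_left]
  | right i => simp [Fin.append_right]

theorem aux_append_mem {a b : ℕ} {f : Fin a → α} {g : Fin b → α} {Z Y : Finset α}
    (hfr : Set.range f = ↑Z) (hgr : Set.range g = ↑Y) (i : Fin (a + b)) :
    Fin.append f g i ∈ Z ∪ Y := by
  induction i using Fin.addCases with
  | left i =>
    rw [Fin.append_left]
    exact Finset.mem_union_left _ (by rw [← Finset.mem_coe, ← hfr]; exact ⟨i, rfl⟩)
  | right i =>
    rw [Fin.append_right]
    exact Finset.mem_union_right _ (by rw [← Finset.mem_coe, ← hgr]; exact ⟨i, rfl⟩)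

theorem aux_append_bij {a b : ℕ} {f : Fin a → α} {g : Fin b → α} {Z Y : Finset α}
    (hfr : Set.range f = ↑Z) (hgr : Set.range g = ↑Y) (hd : Disjoint Z Y)
    (hcZ : Z.card = a) (hcY : Y.card = b) :
    Function.Bijective (fun i : Fin (a + b) =>
      (⟨Fin.append f g i, aux_append_mem hfr hgr i⟩ : {x // x ∈ Z ∪ Y})) := by
  rw [Fintype.bijective_iff_surjective_and_card]
  constructor
  · intro x
    rcases Finset.mem_union.1 x.2 with hx | hx
    · obtain ⟨i, hi⟩ : x.1 ∈ Set.range f := by rw [hfr]; exact Finset.mem_coe.2 hx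
      exact ⟨Fin.castAdd b i, Subtype.ext (by show Fin.append f g _ = _; rw [Fin.append_left]; exact hi)⟩
    · obtain ⟨i, hi⟩ : x.1 ∈ Set.range g := by rw [hgr]; exact Finset.mem_coe.2 hx
      exact ⟨Fin.natAdd a i, Subtype.ext (by show Fin.append f g _ = _; rw [Fin.append_right]; exact hi)⟩
  · simp [Fintype.card_coe, Finset.card_union_of_disjoint hd, hcZ, hcY]

end Glue
/-- Independence in the partition matroid with blocks `Eb i` and capacities `kb i`
on the ground set `E`. -/
def PartIndep {α : Type*} [DecidableEq α] (E : Finset α) {ℓ : ℕ}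
    (Eb : Fin ℓ → Finset α) (kb : Fin ℓ → ℕ) (X : Finset α) : Prop :=
  X ⊆ E ∧ ∀ i, (X ∩ Eb i).card ≤ kb i

set_option synthInstance.maxHeartbeats 1000000 in
set_option maxHeartbeats 4000000 in
/-- For a `p`-family `S` of independent sets of a partition matroid and any `ℓ' ≥ 0`,
there is an `ℓ'`-representative subfamily `Ŝ ⊆ S` of size at most `C(p + ℓ', p)`. -/
theorem stmt_1 {α : Type*} [DecidableEq α]
    (E : Finset α) (ℓ : ℕ) (Eb : Fin ℓ → Finset α) (kb : Fin ℓ → ℕ)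
    (hdisj : ∀ i j, i ≠ j → Disjoint (Eb i) (Eb j))
    (hcover : Finset.univ.biUnion Eb = E)
    (S : Finset (Finset α)) (p ℓ' : ℕ)
    (hcard : ∀ X ∈ S, X.card = p)
    (hindep : ∀ X ∈ S, PartIndep E Eb kb X) :
    ∃ Shat ⊆ S, Shat.card ≤ (p + ℓ').choose p ∧
      ∀ Y : Finset α, Y ⊆ E → Y.card ≤ ℓ' →
        (∃ X ∈ S, Disjoint X Y ∧ PartIndep E Eb kb (X ∪ Y)) →
        ∃ X' ∈ Shat, Disjoint X' Y ∧ PartIndep E Eb kb (X' ∪ Y) := by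
  classical
  set n := p + ℓ' with hn
  have hblk : ∀ e ∈ E, ∃ i, e ∈ Eb i := by
    intro e he
    rw [← hcover] at he
    simpa using Finset.mem_biUnion.1 he
  let K := auxK α ℓ n
  let uK : α → Fin n → K := auxUK Eb kb n
  let w : {X // X ∈ S} → ExteriorAlgebra K (Fin n → K) :=
    fun X => ExteriorAlgebra.ιMulti K p (fun i => uK (auxEnum p X.1 (hcard X.1 X.2) i))
  let tB := (Finset.powersetCard p (Finset.univ : Finset (Fin n))).image (auxBf K n p)
  have hwspan : ∀ X, w X ∈ Submodule.span K (↑tB : Set (ExteriorAlgebra K (Fin n → K))) :=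
    fun X => aux_iMulti_mem_span K n p _
  obtain ⟨b, hbsub, hbspan, hbli⟩ := exists_linearIndependent K (Set.range w)
  have hbfin : b.Finite := (Set.finite_range w).subset hbsub
  haveI : Fintype b := hbfin.fintype
  have hbcard : Fintype.card b ≤ (p + ℓ').choose p := by
    have hmem : ∀ x : b, (x : ExteriorAlgebra K (Fin n → K)) ∈
        Submodule.span K (↑tB : Set (ExteriorAlgebra K (Fin n → K))) := by
      intro x
      obtain ⟨X, hX⟩ := hbsub x.2
      rw [← hX]
      exact hwspan X
    have h1 := aux_card_le_of_span tB hmem hbli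
    refine h1.trans (Finset.card_image_le.trans ?_)
    rw [Finset.card_powersetCard]
    simp [hn]
  let pick : ExteriorAlgebra K (Fin n → K) → Finset α := fun v =>
    if h : ∃ X : {X // X ∈ S}, w X = v then h.choose.1 else ∅
  let Shat := hbfin.toFinset.image pick
  have hpick_mem : ∀ v ∈ hbfin.toFinset, ∃ hmem : pick v ∈ S, w ⟨pick v, hmem⟩ = v := by
    intro v hv
    obtain ⟨X, hX⟩ := hbsub (hbfin.mem_toFinset.1 hv)
    have hex : ∃ X : {X // X ∈ S}, w X = v := ⟨X, hX⟩
    have hpv : pick v = hex.choose.1 := dif_pos hex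
    have hmem : pick v ∈ S := by rw [hpv]; exact hex.choose.2
    refine ⟨hmem, ?_⟩
    have h2 : (⟨pick v, hmem⟩ : {X // X ∈ S}) = hex.choose := Subtype.ext hpv
    rw [h2]
    exact hex.choose_spec
  refine ⟨Shat, ?_, ?_, ?_⟩
  · intro Z hZ
    obtain ⟨v, hv, rfl⟩ := Finset.mem_image.1 hZ
    exact (hpick_mem v hv).choose
  · calc Shat.card ≤ hbfin.toFinset.card := Finset.card_image_le
      _ = Fintype.card b := by rw [Set.Finite.card_toFinset]
      _ ≤ _ := hbcard
  · rintro Y hYE hYcard ⟨X, hXS, hdisjXY, hXYind⟩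
    let eY : Fin Y.card → α := auxEnum Y.card Y rfl
    let ωY := ExteriorAlgebra.ιMulti K Y.card (fun i => uK (eY i))
    have hprod : ∀ (Z : Finset α) (hZ : Z.card = p),
        ExteriorAlgebra.ιMulti K p (fun i => uK (auxEnum p Z hZ i)) * ωY
          = ExteriorAlgebra.ιMulti K (p + Y.card)
              (fun i => uK (Fin.append (auxEnum p Z hZ) eY i)) := by
      intro Z hZ
      rw [show ωY = ExteriorAlgebra.ιMulti K Y.card (fun i => uK (eY i)) from rfl,
        aux_iMulti_mul]
      congr 1
      exact aux_append_comp uK (auxEnum p Z hZ) eY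
    have hkey : ∀ (Z : Finset α) (hZS : Z ∈ S), Disjoint Z Y → PartIndep E Eb kb (Z ∪ Y) →
        w ⟨Z, hZS⟩ * ωY ≠ 0 := by
      intro Z hZS hdZ hiZ
      show ExteriorAlgebra.ιMulti K p (fun i => uK (auxEnum p Z (hcard Z hZS) i)) * ωY ≠ 0
      rw [hprod Z (hcard Z hZS)]
      have hcU : (Z ∪ Y).card = p + Y.card := by
        rw [Finset.card_union_of_disjoint hdZ, hcard Z hZS]
      have hindepT := auxClaimB (n := n) hdisj (Z ∪ Y)
        (fun e he => hblk e (hiZ.1 he))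
        (by rw [hcU]; exact Nat.add_le_add_left hYcard p) hiZ.2
      have hbij := aux_append_bij (auxEnum_range (hcard Z hZS)) (auxEnum_range (rfl : Y.card = Y.card))
        hdZ (hcard Z hZS) rfl
      have hli := hindepT.comp _ hbij.injective
      exact aux_iMulti_ne_zero hli
    have hXprod : w ⟨X, hXS⟩ * ωY ≠ 0 := hkey X hXS hdisjXY hXYind
    have hex : ∃ v ∈ hbfin.toFinset, v * ωY ≠ 0 := by
      by_contra hnone
      push_neg at hnone
      have hker : Submodule.span K b ≤ LinearMap.ker (LinearMap.mulRight K ωY) := by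
        rw [Submodule.span_le]
        intro v hv
        simp only [SetLike.mem_coe, LinearMap.mem_ker, LinearMap.mulRight_apply]
        exact hnone v (hbfin.mem_toFinset.2 hv)
      have hXmem : w ⟨X, hXS⟩ ∈ Submodule.span K b := by
        rw [hbspan]
        exact Submodule.subset_span ⟨⟨X, hXS⟩, rfl⟩
      have h3 := hker hXmem
      simp only [LinearMap.mem_ker, LinearMap.mulRight_apply] at h3
      exact hXprod h3
    obtain ⟨v, hvF, hvne⟩ := hex
    obtain ⟨hmem2, hwv⟩ := hpick_mem v hvF
    have hX'prod : w ⟨pick v, hmem2⟩ * ωY ≠ 0 := by rw [hwv]; exact hvne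
    have hX'card : pick v ∈ S := hmem2
    let eX' : Fin p → α := auxEnum p (pick v) (hcard _ hmem2)
    have hFne : ExteriorAlgebra.ιMulti K (p + Y.card)
        (fun i => uK (Fin.append eX' eY i)) ≠ 0 := by
      rw [← hprod (pick v) (hcard _ hmem2)]
      exact hX'prod
    have hdisjX'Y : Disjoint (pick v) Y := by
      rw [Finset.disjoint_left]
      intro e heX' heY'
      have h1 : e ∈ Set.range eX' := by
        rw [auxEnum_range]; exact Finset.mem_coe.2 heX'
      have h2 : e ∈ Set.range eY := by
        rw [auxEnum_range]; exact Finset.mem_coe.2 heY'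
      obtain ⟨i1, hi1⟩ := h1
      obtain ⟨i2, hi2⟩ := h2
      refine hFne (AlternatingMap.map_eq_zero_of_eq _ _
        (i := Fin.castAdd Y.card i1) (j := Fin.natAdd p i2) ?_ ?_)
      · show uK (Fin.append eX' eY _) = uK (Fin.append eX' eY _)
        rw [Fin.append_left, Fin.append_right, hi1, hi2]
      · intro hcontra
        have hval := congrArg Fin.val hcontra
        simp only [Fin.coe_castAdd, Fin.coe_natAdd] at hval
        omega
    have hcaps : ∀ i, (((pick v) ∪ Y) ∩ Eb i).card ≤ kb i := by
      intro i
      by_contra hlt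
      push_neg at hlt
      have hdep := auxClaimA (n := n) hdisj ((pick v) ∪ Y) i hlt
      have hbij := aux_append_bij (auxEnum_range (hcard _ hmem2))
        (auxEnum_range (rfl : Y.card = Y.card)) hdisjX'Y (hcard _ hmem2) rfl
      let eEq : Fin (p + Y.card) ≃ {x // x ∈ (pick v) ∪ Y} := Equiv.ofBijective _ hbij
      have hnli : ¬ LinearIndependent K (fun i : Fin (p + Y.card) =>
          uK (Fin.append eX' eY i)) := by
        intro hli
        exact hdep ((linearIndependent_equiv eEq).1 hli)
      exact hFne (AlternatingMap.map_linearDependent _ _ hnli)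
    have hsubE : (pick v) ∪ Y ⊆ E := Finset.union_subset (hindep _ hmem2).1 hYE
    exact ⟨pick v, Finset.mem_image_of_mem pick hvF, hdisjX'Y, hsubE, hcaps⟩
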